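/- Let K be a real m×s matrix, let g ∈ ℝ^m, let μ > 0, let P be a symmetric positive definite real m×m matrix, and let 0 < λ < 1/‖KᵀPK‖ (spectral norm). Define sequences by z⁰ = x⁰ = 0 and, for n ≥ 0, z^{n+1} = z^n + KᵀP(g − K x^n), x^{n+1} = λ·S_μ(z^{n+1}). Then the sequence (x^n) converges to the unique solution of the problem: minimize μ‖x‖₁ + (1/(2λ))‖x‖² over the set of minimizers of ‖Kx − g‖²_P := (Kx − g)ᵀP(Kx − g) in ℝ^s. -/

import Mathlib

set_option maxHeartbeats 1000000
set_option synthInstance.maxHeartbeats 1000000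


open Matrix Filter

/-- Soft-thresholding operator acting componentwise:
`S_μ(u)_i = sgn(u_i) · max(|u_i| − μ, 0)`. -/
noncomputable def soft {s : ℕ} (μ : ℝ) (u : EuclideanSpace ℝ (Fin s)) : EuclideanSpace ℝ (Fin s) :=
  WithLp.toLp 2 (fun i => Real.sign (u i) * max (|u i| - μ) 0)

/-- Matrix-vector multiplication as a map between Euclidean spaces. -/
noncomputable def mulVecE {m n : ℕ} (A : Matrix (Fin m) (Fin n) ℝ)
    (v : EuclideanSpace ℝ (Fin n)) : EuclideanSpace ℝ (Fin m) :=
  WithLp.toLp 2 (A.mulVec v)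

/-- The spectral norm of a real matrix: the operator norm induced by Euclidean vector norms. -/
noncomputable def specNorm {m n : ℕ} (A : Matrix (Fin m) (Fin n) ℝ) : ℝ :=
  ‖(Matrix.toEuclideanLin A).toContinuousLinearMap‖

/-- The ℓ¹-norm of a vector. -/
noncomputable def l1norm {s : ℕ} (u : EuclideanSpace ℝ (Fin s)) : ℝ := ∑ i, |u i|


noncomputable def ssc (μ t : ℝ) : ℝ := max (t - μ) 0 + min (t + μ) 0

lemma ssc_eq_sign {μ : ℝ} (hμ : 0 ≤ μ) (t : ℝ) :
    Real.sign t * max (|t| - μ) 0 = ssc μ t := by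
  unfold ssc
  rcases lt_trichotomy t 0 with h | h | h
  · rw [Real.sign_of_neg h, abs_of_neg h]
    rcases le_or_gt (t + μ) 0 with h2 | h2
    · rw [max_eq_left (by linarith : (0:ℝ) ≤ -t - μ), max_eq_right (by linarith : t - μ ≤ 0),
        min_eq_left h2]; ring
    · rw [max_eq_right (by linarith : -t - μ ≤ 0), max_eq_right (by linarith : t - μ ≤ 0),
        min_eq_right h2.le]; ring
  · simp [h, max_eq_right (by linarith : -μ ≤ (0:ℝ)), min_eq_right (by linarith : (0:ℝ) ≤ μ)]
  · rw [Real.sign_of_pos h, abs_of_pos h, min_eq_right (by linarith), one_mul, add_zero]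

lemma ssc_mono {μ : ℝ} : Monotone (ssc μ) := by
  intro a b hab
  unfold ssc
  gcongr <;> linarith

lemma id_sub_ssc_mono {μ : ℝ} (hμ : 0 ≤ μ) {a b : ℝ} (hab : a ≤ b) :
    a - ssc μ a ≤ b - ssc μ b := by
  simp only [ssc, max_def, min_def]
  split_ifs <;> linarith

lemma ssc_firm {μ : ℝ} (hμ : 0 ≤ μ) (a b : ℝ) :
    (ssc μ a - ssc μ b) ^ 2 ≤ (ssc μ a - ssc μ b) * (a - b) := by
  rcases le_total a b with h | h
  · have h1 : ssc μ a ≤ ssc μ b := ssc_mono h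
    have h2 := id_sub_ssc_mono hμ h
    nlinarith [mul_nonneg (sub_nonneg.2 h1) (by linarith : (0:ℝ) ≤ (b - ssc μ b) - (a - ssc μ a))]
  · have h1 : ssc μ b ≤ ssc μ a := ssc_mono h
    have h2 := id_sub_ssc_mono hμ h
    nlinarith [mul_nonneg (sub_nonneg.2 h1) (by linarith : (0:ℝ) ≤ (a - ssc μ a) - (b - ssc μ b))]

lemma ssc_lip {μ : ℝ} (hμ : 0 ≤ μ) (a b : ℝ) : |ssc μ a - ssc μ b| ≤ |a - b| := by
  rcases le_total a b with h | h
  · have h1 : ssc μ a ≤ ssc μ b := ssc_mono h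
    have h2 := id_sub_ssc_mono hμ h
    rw [abs_of_nonpos (by linarith), abs_of_nonpos (by linarith)]
    linarith
  · have h1 : ssc μ b ≤ ssc μ a := ssc_mono h
    have h2 := id_sub_ssc_mono hμ h
    rw [abs_of_nonneg (by linarith), abs_of_nonneg (by linarith)]
    linarith

lemma ssc_zero {μ : ℝ} (hμ : 0 ≤ μ) : ssc μ 0 = 0 := by
  unfold ssc
  rw [max_eq_right (by linarith), min_eq_right (by linarith)]
  norm_num

lemma ssc_continuous (μ : ℝ) : Continuous (ssc μ) := by
  unfold ssc; fun_prop

/-- Key subgradient inequality, multiplied through by `2 lam`. -/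
lemma ssc_key {μ lam : ℝ} (hμ : 0 ≤ μ) (hl : 0 < lam) (z y : ℝ) :
    2*lam*μ*|lam * ssc μ z| + (lam * ssc μ z)^2 + 2*lam*(z*(y - lam * ssc μ z))
      + (y - lam * ssc μ z)^2 ≤ 2*lam*μ*|y| + y^2 := by
  have habs : y ≤ |y| := le_abs_self y
  have habs2 : -|y| ≤ y := neg_abs_le y
  rcases le_or_gt z (-μ) with hz | hz
  · have hs : ssc μ z = z + μ := by
      unfold ssc; rw [max_eq_right (by linarith), min_eq_left (by linarith)]; ring
    rw [hs]
    have hxneg : lam * (z + μ) ≤ 0 := by nlinarith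
    rw [abs_of_nonpos hxneg]
    nlinarith [mul_nonneg (mul_nonneg hl.le hμ) (by linarith : (0:ℝ) ≤ |y| + y)]
  rcases le_or_gt μ z with hz2 | hz2
  · have hs : ssc μ z = z - μ := by
      unfold ssc; rw [max_eq_left (by linarith), min_eq_right (by linarith)]; ring
    rw [hs]
    have hxpos : 0 ≤ lam * (z - μ) := by nlinarith
    rw [abs_of_nonneg hxpos]
    nlinarith [mul_nonneg (mul_nonneg hl.le hμ) (by linarith : (0:ℝ) ≤ |y| - y)]
  · have hs : ssc μ z = 0 := by
      unfold ssc; rw [max_eq_right (by linarith), min_eq_right (by linarith)]; norm_num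
    rw [hs]
    simp only [mul_zero, abs_zero, sub_zero]
    have hzy : z * y ≤ μ * |y| := by
      rcases le_total 0 y with hy | hy
      · rw [abs_of_nonneg hy]; nlinarith
      · rw [abs_of_nonpos hy]; nlinarith
    nlinarith [mul_le_mul_of_nonneg_left hzy (by positivity : (0:ℝ) ≤ 2*lam)]

/-- Subgradient inequality for `phi t = (max (|t| - μ) 0)^2 / 2` (multiplied by 2). -/
lemma phi_subgrad {μ : ℝ} (hμ : 0 ≤ μ) (a b : ℝ) :
    max (|b| - μ) 0 ^ 2 + 2 * ssc μ b * (a - b) ≤ max (|a| - μ) 0 ^ 2 := by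
  have ha1 : |a| - μ ≤ max (|a| - μ) 0 := le_max_left _ _
  have ha2 : (0:ℝ) ≤ max (|a| - μ) 0 := le_max_right _ _
  have haa : a ≤ |a| := le_abs_self a
  have haa2 : -|a| ≤ a := neg_abs_le a
  rcases le_or_gt b (-μ) with hb | hb
  · have hs : ssc μ b = b + μ := by
      unfold ssc; rw [max_eq_right (by linarith), min_eq_left (by linarith)]; ring
    have habs : |b| = -b := abs_of_nonpos (by linarith)
    rw [hs, habs, max_eq_left (by linarith : (0:ℝ) ≤ -b - μ)]
    nlinarith [mul_nonneg (by linarith : (0:ℝ) ≤ -b - μ)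
        (by linarith : (0:ℝ) ≤ max (|a| - μ) 0 - (-a - μ)),
      sq_nonneg ((-b - μ) - max (|a| - μ) 0)]
  rcases le_or_gt μ b with hb2 | hb2
  · have hs : ssc μ b = b - μ := by
      unfold ssc; rw [max_eq_left (by linarith), min_eq_right (by linarith)]; ring
    have habs : |b| = b := abs_of_nonneg (by linarith)
    rw [hs, habs, max_eq_left (by linarith : (0:ℝ) ≤ b - μ)]
    nlinarith [mul_nonneg (by linarith : (0:ℝ) ≤ b - μ)
        (by linarith : (0:ℝ) ≤ max (|a| - μ) 0 - (a - μ)),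
      sq_nonneg ((b - μ) - max (|a| - μ) 0)]
  · have hs : ssc μ b = 0 := by
      unfold ssc; rw [max_eq_right (by linarith), min_eq_right (by linarith)]; norm_num
    have habs : |b| - μ ≤ 0 := by
      rcases le_total 0 b with h | h
      · rw [abs_of_nonneg h]; linarith
      · rw [abs_of_nonpos h]; linarith
    rw [hs, max_eq_right habs]
    nlinarith

/-- Lower bound for coercivity. -/
lemma phi_lb {μ : ℝ} (hμ : 0 ≤ μ) (t : ℝ) :
    t^2 - 2*μ*|t| ≤ max (|t| - μ) 0 ^ 2 := by
  have h0 : 0 ≤ |t| := abs_nonneg t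
  rcases le_or_gt (|t| - μ) 0 with h | h
  · rw [max_eq_right h]
    nlinarith [sq_abs t]
  · rw [max_eq_left h.le]
    nlinarith [sq_abs t]

lemma mulVecE_eq_toE {m n : ℕ} (M : Matrix (Fin m) (Fin n) ℝ) (x : EuclideanSpace ℝ (Fin n)) :
    mulVecE M x = (Matrix.toEuclideanLin M).toContinuousLinearMap x := by
  rw [LinearMap.coe_toContinuousLinearMap', Matrix.toEuclideanLin_apply]; rfl

lemma norm_mulVecE_le {m n : ℕ} (M : Matrix (Fin m) (Fin n) ℝ) (x : EuclideanSpace ℝ (Fin n)) :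
    ‖mulVecE M x‖ ≤ specNorm M * ‖x‖ := by
  rw [mulVecE_eq_toE]
  exact (Matrix.toEuclideanLin M).toContinuousLinearMap.le_opNorm x

lemma continuous_mulVecE {m n : ℕ} (M : Matrix (Fin m) (Fin n) ℝ) :
    Continuous (mulVecE M) := by
  have : mulVecE M = ⇑(Matrix.toEuclideanLin M).toContinuousLinearMap := by
    funext x; exact mulVecE_eq_toE M x
  rw [this]
  exact (Matrix.toEuclideanLin M).toContinuousLinearMap.continuous

lemma mulVecE_add {m n : ℕ} (M : Matrix (Fin m) (Fin n) ℝ) (x y : EuclideanSpace ℝ (Fin n)) :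
    mulVecE M (x + y) = mulVecE M x + mulVecE M y := by
  simp only [mulVecE_eq_toE, map_add]

lemma mulVecE_sub {m n : ℕ} (M : Matrix (Fin m) (Fin n) ℝ) (x y : EuclideanSpace ℝ (Fin n)) :
    mulVecE M (x - y) = mulVecE M x - mulVecE M y := by
  simp only [mulVecE_eq_toE, map_sub]

lemma mulVecE_smul {m n : ℕ} (M : Matrix (Fin m) (Fin n) ℝ) (c : ℝ) (x : EuclideanSpace ℝ (Fin n)) :
    mulVecE M (c • x) = c • mulVecE M x := by
  simp only [mulVecE_eq_toE, _root_.map_smul]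

lemma mulVecE_zero {m n : ℕ} (M : Matrix (Fin m) (Fin n) ℝ) :
    mulVecE M (0 : EuclideanSpace ℝ (Fin n)) = 0 := by
  simp only [mulVecE_eq_toE, map_zero]

lemma mulVecE_mulVecE {m n p : ℕ} (M : Matrix (Fin m) (Fin n) ℝ) (N : Matrix (Fin n) (Fin p) ℝ)
    (x : EuclideanSpace ℝ (Fin p)) :
    mulVecE M (mulVecE N x) = mulVecE (M * N) x := by
  simp [mulVecE, Matrix.mulVec_mulVec]

lemma real_inner_eq_dot {n : ℕ} (x y : EuclideanSpace ℝ (Fin n)) :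
    (inner ℝ x y : ℝ) = ∑ i, x i * y i := by
  simp [PiLp.inner_apply, RCLike.inner_apply, conj_trivial, mul_comm]

lemma inner_mulVecE {m n : ℕ} (M : Matrix (Fin m) (Fin n) ℝ) (x : EuclideanSpace ℝ (Fin n))
    (y : EuclideanSpace ℝ (Fin m)) :
    (inner ℝ (mulVecE M x) y : ℝ) = inner ℝ x (mulVecE Mᵀ y) := by
  rw [real_inner_eq_dot, real_inner_eq_dot]
  show ∑ i, (M.mulVec x) i * y i = ∑ j, x j * (Mᵀ.mulVec y) j
  simp only [Matrix.mulVec, dotProduct, Matrix.transpose_apply, Finset.sum_mul,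
    Finset.mul_sum]
  rw [Finset.sum_comm]
  congr 1; ext j; congr 1; ext i; ring

lemma norm_sq_eq_dot {n : ℕ} (x : EuclideanSpace ℝ (Fin n)) :
    ‖x‖ ^ 2 = ∑ i, x i * x i := by
  rw [← real_inner_eq_dot, real_inner_self_eq_norm_sq]


lemma soft_apply_ssc {n : ℕ} {μ : ℝ} (hμ : 0 ≤ μ) (u : EuclideanSpace ℝ (Fin n)) (i : Fin n) :
    soft μ u i = ssc μ (u i) := ssc_eq_sign hμ (u i)

lemma soft_zero {n : ℕ} {μ : ℝ} (hμ : 0 ≤ μ) : soft μ (0 : EuclideanSpace ℝ (Fin n)) = 0 := by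
  ext i
  rw [soft_apply_ssc hμ]
  show ssc μ ((0 : EuclideanSpace ℝ (Fin n)) i) = (0 : EuclideanSpace ℝ (Fin n)) i
  rw [PiLp.zero_apply, ssc_zero hμ]

lemma continuous_soft {n : ℕ} {μ : ℝ} (hμ : 0 ≤ μ) :
    Continuous (soft μ : EuclideanSpace ℝ (Fin n) → EuclideanSpace ℝ (Fin n)) := by
  have heq : (soft μ : EuclideanSpace ℝ (Fin n) → EuclideanSpace ℝ (Fin n))
      = (WithLp.equiv 2 (Fin n → ℝ)).symm ∘ (fun v : Fin n → ℝ => fun i => ssc μ (v i))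
        ∘ (WithLp.equiv 2 (Fin n → ℝ)) := by
    funext u
    ext i
    exact soft_apply_ssc hμ u i
  rw [heq]
  exact (PiLp.continuous_toLp 2 (fun _ : Fin n => ℝ)).comp
    ((continuous_pi fun i => (ssc_continuous μ).comp (continuous_apply i)).comp
      (PiLp.continuous_ofLp 2 (fun _ : Fin n => ℝ)))

lemma firm_vec {n : ℕ} {μ : ℝ} (hμ : 0 ≤ μ) (u v : EuclideanSpace ℝ (Fin n)) :
    ‖soft μ u - soft μ v‖ ^ 2 ≤ inner ℝ (soft μ u - soft μ v) (u - v) := by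
  rw [norm_sq_eq_dot, real_inner_eq_dot]
  apply Finset.sum_le_sum
  intro i _
  rw [PiLp.sub_apply, PiLp.sub_apply, soft_apply_ssc hμ, soft_apply_ssc hμ]
  have := ssc_firm hμ (u i) (v i)
  nlinarith [this]

lemma abs_coord_le_norm {n : ℕ} (t : EuclideanSpace ℝ (Fin n)) (i : Fin n) : |t i| ≤ ‖t‖ := by
  have h1 : t i * t i ≤ ∑ j, t j * t j := by
    apply Finset.single_le_sum (f := fun j => t j * t j) (fun j _ => mul_self_nonneg _)
      (Finset.mem_univ i)
  have h2 : ‖t‖ ^ 2 = ∑ j, t j * t j := norm_sq_eq_dot t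
  nlinarith [norm_nonneg t, abs_nonneg (t i), sq_abs (t i)]

lemma nonneg_of_forall_pos {c d : ℝ} (hd : 0 ≤ d) (h : ∀ t : ℝ, 0 < t → 0 ≤ c * t + d * t ^ 2) :
    0 ≤ c := by
  by_contra hc
  push_neg at hc
  set t := -c / (2 * (d + 1)) with htdef
  have ht : 0 < t := div_pos (by linarith) (by linarith)
  have ht2 : t * (2 * (d + 1)) = -c := div_mul_cancel₀ _ (by positivity)
  have h2 := h t ht
  have h3 : d * t ≤ -c / 2 := by nlinarith [ht2, ht.le]
  nlinarith [h2, mul_le_mul_of_nonneg_left h3 ht.le, mul_pos ht (show (0:ℝ) < -c/2 by linarith)]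

lemma tendsto_of_antitone_of_subseq {a : ℕ → ℝ} (hmono : Antitone a) (hpos : ∀ n, 0 ≤ a n)
    {φ : ℕ → ℕ} (hφ : StrictMono φ) (hsub : Tendsto (fun k => a (φ k)) atTop (nhds 0)) :
    Tendsto a atTop (nhds 0) := by
  have hbdd : BddBelow (Set.range a) := ⟨0, by rintro _ ⟨n, rfl⟩; exact hpos n⟩
  have hlim := tendsto_atTop_ciInf hmono hbdd
  have hlim2 : Tendsto (fun k => a (φ k)) atTop (nhds (⨅ n, a n)) := hlim.comp hφ.tendsto_atTop
  have h0 : (⨅ n, a n) = 0 := tendsto_nhds_unique hlim2 hsub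
  rwa [h0] at hlim

lemma norm_le_of_sq_le_sq {E' : Type*} [NormedAddCommGroup E'] {v : E'} {r : ℝ} (hr : 0 ≤ r)
    (h : ‖v‖ ^ 2 ≤ r ^ 2) : ‖v‖ ≤ r := by
  nlinarith [norm_nonneg v]

lemma tendsto_norm_zero_of_sq {a : ℕ → ℝ} (hpos : ∀ n, 0 ≤ a n)
    (h : Tendsto (fun n => a n ^ 2) atTop (nhds 0)) : Tendsto a atTop (nhds 0) := by
  have h2 : Tendsto (fun n => Real.sqrt (a n ^ 2)) atTop (nhds (Real.sqrt 0)) :=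
    (Real.continuous_sqrt.tendsto 0).comp h
  rw [Real.sqrt_zero] at h2
  refine h2.congr fun n => ?_
  rw [Real.sqrt_sq (hpos n)]

lemma phi_upper {μ : ℝ} (hμ : 0 ≤ μ) (a h : ℝ) :
    max (|a + h| - μ) 0 ^ 2 ≤ max (|a| - μ) 0 ^ 2 + 2 * ssc μ a * h + 2 * h ^ 2 := by
  have h1 := phi_subgrad hμ a (a + h)
  have h2 : |ssc μ (a + h) - ssc μ a| ≤ |h| := by simpa using ssc_lip hμ (a + h) a
  have h3 : (ssc μ (a + h) - ssc μ a) * h ≤ h ^ 2 := by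
    calc (ssc μ (a + h) - ssc μ a) * h ≤ |(ssc μ (a + h) - ssc μ a) * h| := le_abs_self _
    _ = |ssc μ (a + h) - ssc μ a| * |h| := abs_mul _ _
    _ ≤ |h| * |h| := mul_le_mul_of_nonneg_right h2 (abs_nonneg h)
    _ = h ^ 2 := by rw [abs_mul_abs_self]; ring
  nlinarith [h1, h3]

/-- The gradient-type map of the dual objective. -/
noncomputable def Gmap {m s : ℕ} (lam μ : ℝ) (A : Matrix (Fin m) (Fin s) ℝ)
    (bR : EuclideanSpace ℝ (Fin m)) (v : EuclideanSpace ℝ (Fin m)) : EuclideanSpace ℝ (Fin m) :=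
  lam • mulVecE A (soft μ (mulVecE Aᵀ v)) - bR

/-- The dual iterates. -/
noncomputable def useq {m s : ℕ} (lam μ : ℝ) (A : Matrix (Fin m) (Fin s) ℝ)
    (bR : EuclideanSpace ℝ (Fin m)) : ℕ → EuclideanSpace ℝ (Fin m)
  | 0 => 0
  | n + 1 => useq lam μ A bR n - Gmap lam μ A bR (useq lam μ A bR n)

lemma exists_antilip {m n : ℕ} (B : Matrix (Fin n) (Fin m) ℝ)
    (V : Submodule ℝ (EuclideanSpace ℝ (Fin m)))
    (hinj : ∀ v ∈ V, mulVecE B v = 0 → v = 0) :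
    ∃ σ : ℝ, 0 < σ ∧ ∀ v ∈ V, σ * ‖v‖ ≤ ‖mulVecE B v‖ := by
  let L : V →ₗ[ℝ] EuclideanSpace ℝ (Fin n) := (Matrix.toEuclideanLin B).comp V.subtype
  have hLinj : Function.Injective L := by
    rw [← LinearMap.ker_eq_bot]
    apply LinearMap.ker_eq_bot'.mpr
    intro v hv
    apply Subtype.ext
    apply hinj v v.2
    rw [mulVecE_eq_toE]
    exact hv
  let e := LinearEquiv.ofInjective L hLinj
  let e' := e.toContinuousLinearEquiv
  set c : ℝ := ‖(e'.symm : LinearMap.range L →L[ℝ] V)‖ with hcdef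
  have hc : 0 ≤ c := by
    rw [hcdef]
    exact norm_nonneg (e'.symm : LinearMap.range L →L[ℝ] V)
  refine ⟨(c + 1)⁻¹, by positivity, ?_⟩
  intro v hv
  set w : V := ⟨v, hv⟩ with hwdef
  have h1 : ‖w‖ ≤ c * ‖e' w‖ := by
    calc ‖w‖ = ‖e'.symm (e' w)‖ := by rw [e'.symm_apply_apply]
    _ ≤ c * ‖e' w‖ := (e'.symm : LinearMap.range L →L[ℝ] V).le_opNorm (e' w)
  have h2 : ‖e' w‖ = ‖mulVecE B v‖ := by
    have he : ((e' w : LinearMap.range L) : EuclideanSpace ℝ (Fin n)) = mulVecE B v := by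
      show ((e w : LinearMap.range L) : EuclideanSpace ℝ (Fin n)) = mulVecE B v
      rw [LinearEquiv.ofInjective_apply]
      rw [mulVecE_eq_toE]
      rfl
    rw [← he]
    rfl
  have h3 : ‖w‖ = ‖v‖ := rfl
  rw [inv_mul_le_iff₀ (by positivity)]
  rw [← h3, ← h2]
  nlinarith [h1, norm_nonneg (e' w)]

lemma exists_min_on_submodule {n : ℕ} (V : Submodule ℝ (EuclideanSpace ℝ (Fin n)))
    (f : EuclideanSpace ℝ (Fin n) → ℝ) (hf : Continuous f) (R : ℝ) (hR : 0 ≤ R)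
    (hcoer : ∀ v ∈ V, R < ‖v‖ → f 0 < f v) :
    ∃ u ∈ V, ∀ v ∈ V, f u ≤ f v := by
  have hVclosed : IsClosed (V : Set (EuclideanSpace ℝ (Fin n))) :=
    Submodule.closed_of_finiteDimensional V
  have hcomp : IsCompact ((V : Set (EuclideanSpace ℝ (Fin n))) ∩ Metric.closedBall 0 R) :=
    (isCompact_closedBall 0 R).inter_left hVclosed
  have hne : ((V : Set (EuclideanSpace ℝ (Fin n))) ∩ Metric.closedBall 0 R).Nonempty :=
    ⟨0, V.zero_mem, Metric.mem_closedBall_self hR⟩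
  obtain ⟨u, hu, hmin⟩ := hcomp.exists_isMinOn hne hf.continuousOn
  refine ⟨u, hu.1, ?_⟩
  intro v hv
  rcases le_or_gt ‖v‖ R with h | h
  · exact hmin ⟨hv, by simpa [Metric.mem_closedBall, dist_eq_norm] using h⟩
  · have h0 : f u ≤ f 0 := hmin ⟨V.zero_mem, Metric.mem_closedBall_self hR⟩
    exact h0.trans (hcoer v hv h).le

/-- Existence of a critical point of the dual objective. -/
lemma exists_critical {m s : ℕ} {μ lam : ℝ} (hμ : 0 < μ) (hlam : 0 < lam)
    (A : Matrix (Fin m) (Fin s) ℝ) (bR : EuclideanSpace ℝ (Fin m))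
    (hbR : bR ∈ LinearMap.range (Matrix.toEuclideanLin A)) :
    ∃ ustar : EuclideanSpace ℝ (Fin m), Gmap lam μ A bR ustar = 0 := by
  have hμ' : 0 ≤ μ := hμ.le
  set V : Submodule ℝ (EuclideanSpace ℝ (Fin m)) := LinearMap.range (Matrix.toEuclideanLin A)
    with hVdef
  have hmemA : ∀ y : EuclideanSpace ℝ (Fin s), mulVecE A y ∈ V := by
    intro y; exact ⟨y, (mulVecE_eq_toE A y).symm⟩
  -- injectivity of Aᵀ on V
  have hinj : ∀ v ∈ V, mulVecE Aᵀ v = 0 → v = 0 := by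
    rintro v ⟨xv, rfl⟩ hv
    have hveq : Matrix.toEuclideanLin A xv = mulVecE A xv := (mulVecE_eq_toE A xv).symm
    rw [hveq] at hv ⊢
    have h1 : ‖mulVecE A xv‖ ^ 2 = inner ℝ xv (mulVecE Aᵀ (mulVecE A xv)) := by
      rw [← real_inner_self_eq_norm_sq, inner_mulVecE]
    rw [hv] at h1
    have h2 : (inner ℝ xv (0 : EuclideanSpace ℝ (Fin s)) : ℝ) = 0 := inner_zero_right xv
    rw [h2] at h1
    have := norm_eq_zero.mp (pow_eq_zero_iff (n := 2) (by norm_num) |>.mp h1)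
    exact this
  obtain ⟨σ, hσ, hσle⟩ := exists_antilip Aᵀ V hinj
  -- the objective
  set Φ : EuclideanSpace ℝ (Fin m) → ℝ :=
    fun v => ∑ i, max (|(mulVecE Aᵀ v) i| - μ) 0 ^ 2 with hΦdef
  set f : EuclideanSpace ℝ (Fin m) → ℝ := fun v => lam * Φ v - 2 * inner ℝ bR v with hfdef
  have hf0 : f 0 = 0 := by
    rw [hfdef]
    simp only
    rw [hΦdef]
    simp only [mulVecE_zero, inner_zero_right]
    have : ∀ i : Fin s, max (|(0 : EuclideanSpace ℝ (Fin s)) i| - μ) 0 ^ 2 = 0 := by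
      intro i
      rw [PiLp.zero_apply, abs_zero, zero_sub, max_eq_right (by linarith), zero_pow]
      norm_num
    rw [Finset.sum_congr rfl fun i _ => this i]
    simp
  have hΦcont : Continuous Φ := by
    rw [hΦdef]
    apply continuous_finset_sum
    intro i _
    have hcoord : Continuous fun v : EuclideanSpace ℝ (Fin m) =>
        (WithLp.equiv 2 (Fin s → ℝ)) (mulVecE Aᵀ v) i :=
      (continuous_apply i).comp ((PiLp.continuous_ofLp 2 fun _ : Fin s => ℝ).comp
        (continuous_mulVecE Aᵀ))
    exact ((hcoord.abs.sub continuous_const).max continuous_const).pow 2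
  have hfcont : Continuous f := by
    rw [hfdef]
    exact (continuous_const.mul hΦcont).sub
      (continuous_const.mul (continuous_const.inner continuous_id))
  -- coercivity
  set MA : ℝ := specNorm Aᵀ with hMAdef
  have hMA : 0 ≤ MA := norm_nonneg _
  set cc : ℝ := lam * (2 * μ * s * MA) + 2 * ‖bR‖ with hccdef
  have hcc : 0 ≤ cc := by positivity
  set R : ℝ := (cc + 1) / (lam * σ ^ 2) with hRdef
  have hR : 0 ≤ R := by positivity
  have hcoer : ∀ v ∈ V, R < ‖v‖ → f 0 < f v := by
    intro v hv hvnorm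
    rw [hf0]
    set t := mulVecE Aᵀ v with htdef
    have hb1 : ∀ i, t i ^ 2 - 2 * μ * |t i| ≤ max (|t i| - μ) 0 ^ 2 := fun i => phi_lb hμ' (t i)
    have hb2 : ∑ i, |t i| ≤ s * ‖t‖ := by
      calc ∑ i, |t i| ≤ ∑ _i : Fin s, ‖t‖ := Finset.sum_le_sum fun i _ => abs_coord_le_norm t i
      _ = s * ‖t‖ := by rw [Finset.sum_const, Finset.card_univ, Fintype.card_fin, nsmul_eq_mul]
    have hb3 : ‖t‖ ^ 2 - 2 * μ * (s * ‖t‖) ≤ Φ v := by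
      rw [hΦdef]
      have e1 : ‖t‖ ^ 2 = ∑ i, t i * t i := norm_sq_eq_dot t
      have e2 : ∑ i, (t i ^ 2 - 2 * μ * |t i|) ≤ ∑ i, max (|t i| - μ) 0 ^ 2 :=
        Finset.sum_le_sum fun i _ => hb1 i
      rw [Finset.sum_sub_distrib] at e2
      have e3 : ∑ i, t i ^ 2 = ∑ i, t i * t i := by
        apply Finset.sum_congr rfl; intro i _; ring
      have e4 : ∑ i, 2 * μ * |t i| = 2 * μ * ∑ i, |t i| := by
        rw [Finset.mul_sum]
      rw [e3, e4] at e2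
      have e5 : 2 * μ * ∑ i, |t i| ≤ 2 * μ * (s * ‖t‖) :=
        mul_le_mul_of_nonneg_left hb2 (by positivity)
      calc ‖t‖ ^ 2 - 2 * μ * (s * ‖t‖) ≤ ‖t‖ ^ 2 - 2 * μ * ∑ i, |t i| := by linarith
      _ = (∑ i, t i * t i) - 2 * μ * ∑ i, |t i| := by rw [e1]
      _ ≤ ∑ i, max (|t i| - μ) 0 ^ 2 := e2
    have hb4 : σ * ‖v‖ ≤ ‖t‖ := hσle v hv
    have hb5 : ‖t‖ ≤ MA * ‖v‖ := norm_mulVecE_le Aᵀ v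
    have hb6 : (inner ℝ bR v : ℝ) ≤ ‖bR‖ * ‖v‖ := real_inner_le_norm bR v
    have hb7 : (σ * ‖v‖) ^ 2 ≤ ‖t‖ ^ 2 := pow_le_pow_left₀ (by positivity) hb4 2
    have hRv : (cc + 1) < lam * σ ^ 2 * ‖v‖ := by
      rw [hRdef] at hvnorm
      rw [div_lt_iff₀ (by positivity)] at hvnorm
      nlinarith [hvnorm]
    have hvpos : 0 < ‖v‖ := hR.trans_lt hvnorm
    rw [hfdef]
    simp only
    have hfv : lam * (‖t‖ ^ 2 - 2 * μ * (s * ‖t‖)) - 2 * (‖bR‖ * ‖v‖) ≤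
        lam * Φ v - 2 * inner ℝ bR v := by
      have := mul_le_mul_of_nonneg_left hb3 hlam.le
      linarith
    have hchain : 0 < lam * (‖t‖ ^ 2 - 2 * μ * (s * ‖t‖)) - 2 * (‖bR‖ * ‖v‖) := by
      have h1 : lam * σ ^ 2 * ‖v‖ ^ 2 ≤ lam * ‖t‖ ^ 2 := by nlinarith [hb7]
      have h2 : lam * (2 * μ * (s * ‖t‖)) ≤ lam * (2 * μ * (s * (MA * ‖v‖))) := by
        apply mul_le_mul_of_nonneg_left _ hlam.le
        apply mul_le_mul_of_nonneg_left _ (by positivity)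
        exact mul_le_mul_of_nonneg_left hb5 (by positivity)
      have h3 : cc * ‖v‖ + ‖v‖ < lam * σ ^ 2 * ‖v‖ ^ 2 := by nlinarith [hRv, hvpos]
      rw [hccdef] at h3
      nlinarith [h3, h1, h2, hvpos]
    linarith
  obtain ⟨ustar, hustarV, hustarmin⟩ := exists_min_on_submodule V f hfcont R hR hcoer
  refine ⟨ustar, ?_⟩
  -- first-order condition
  have hfirst : ∀ w ∈ V, 0 ≤ (inner ℝ (Gmap lam μ A bR ustar) w : ℝ) := by
    intro w hw
    set α : ℝ := inner ℝ (soft μ (mulVecE Aᵀ ustar)) (mulVecE Aᵀ w) with hαdef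
    set β : ℝ := ‖mulVecE Aᵀ w‖ ^ 2 with hβdef
    have hβ : 0 ≤ β := by rw [hβdef]; positivity
    have hinnerG : (inner ℝ (Gmap lam μ A bR ustar) w : ℝ) = lam * α - inner ℝ bR w := by
      rw [Gmap, inner_sub_left, real_inner_smul_left, inner_mulVecE, hαdef]
    rw [hinnerG]
    apply nonneg_of_forall_pos (d := lam * β) (by positivity)
    intro τ hτ
    have hΦup : Φ (ustar + τ • w) ≤ Φ ustar + 2 * τ * α + 2 * τ ^ 2 * β := by
      have hco : ∀ i, (mulVecE Aᵀ (ustar + τ • w)) i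
          = (mulVecE Aᵀ ustar) i + τ * (mulVecE Aᵀ w) i := by
        intro i
        rw [mulVecE_add, mulVecE_smul, PiLp.add_apply, PiLp.smul_apply, smul_eq_mul]
      rw [hΦdef]
      simp only
      calc ∑ i, max (|(mulVecE Aᵀ (ustar + τ • w)) i| - μ) 0 ^ 2
          = ∑ i, max (|(mulVecE Aᵀ ustar) i + τ * (mulVecE Aᵀ w) i| - μ) 0 ^ 2 := by
            apply Finset.sum_congr rfl; intro i _; rw [hco i]
        _ ≤ ∑ i, (max (|(mulVecE Aᵀ ustar) i| - μ) 0 ^ 2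
              + 2 * ssc μ ((mulVecE Aᵀ ustar) i) * (τ * (mulVecE Aᵀ w) i)
              + 2 * (τ * (mulVecE Aᵀ w) i) ^ 2) := by
            apply Finset.sum_le_sum; intro i _; exact phi_upper hμ' _ _
        _ = (∑ i, max (|(mulVecE Aᵀ ustar) i| - μ) 0 ^ 2) + 2 * τ * α + 2 * τ ^ 2 * β := by
            rw [Finset.sum_add_distrib, Finset.sum_add_distrib]
            congr 1
            · congr 1
              rw [hαdef, real_inner_eq_dot, Finset.mul_sum]
              apply Finset.sum_congr rfl; intro i _
              rw [soft_apply_ssc hμ']; ring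
            · rw [hβdef, norm_sq_eq_dot, Finset.mul_sum]
              apply Finset.sum_congr rfl; intro i _; ring
    have hmin2 : f ustar ≤ f (ustar + τ • w) :=
      hustarmin _ (V.add_mem hustarV (V.smul_mem τ hw))
    have hfexp : f (ustar + τ • w) = lam * Φ (ustar + τ • w)
        - 2 * inner ℝ bR ustar - 2 * τ * inner ℝ bR w := by
      rw [hfdef]
      simp only
      rw [inner_add_right, real_inner_smul_right]
      ring
    have hfu : f ustar = lam * Φ ustar - 2 * inner ℝ bR ustar := by rw [hfdef]
    have hkey : 0 ≤ 2 * τ * (lam * α - inner ℝ bR w) + 2 * (lam * β) * τ ^ 2 := by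
      have := mul_le_mul_of_nonneg_left hΦup hlam.le
      nlinarith [hmin2, hfexp, hfu, this]
    nlinarith [hkey]
  have hGmem : Gmap lam μ A bR ustar ∈ V := by
    rw [Gmap]
    exact V.sub_mem (V.smul_mem lam (hmemA _)) hbR
  have h1 := hfirst _ hGmem
  have h2 := hfirst _ (V.neg_mem hGmem)
  rw [inner_neg_right] at h2
  have h3 : (inner ℝ (Gmap lam μ A bR ustar) (Gmap lam μ A bR ustar) : ℝ) = 0 := le_antisymm (by linarith) h1
  exact inner_self_eq_zero.mp h3

lemma Gmap_coco {m s : ℕ} {μ lam N : ℝ} (hμ : 0 ≤ μ) (hlam : 0 < lam) (hN : 0 < N)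
    (A : Matrix (Fin m) (Fin s) ℝ) (bR : EuclideanSpace ℝ (Fin m))
    (hA : ∀ d : EuclideanSpace ℝ (Fin s), ‖mulVecE A d‖ ^ 2 ≤ N * ‖d‖ ^ 2)
    (v w : EuclideanSpace ℝ (Fin m)) :
    ‖Gmap lam μ A bR v - Gmap lam μ A bR w‖ ^ 2
      ≤ (lam * N) * inner ℝ (Gmap lam μ A bR v - Gmap lam μ A bR w) (v - w) := by
  set d := soft μ (mulVecE Aᵀ v) - soft μ (mulVecE Aᵀ w) with hd
  have hsub : Gmap lam μ A bR v - Gmap lam μ A bR w = lam • mulVecE A d := by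
    rw [Gmap, Gmap, hd, mulVecE_sub, smul_sub]
    abel
  rw [hsub]
  have h1 : ‖d‖ ^ 2 ≤ (inner ℝ d (mulVecE Aᵀ v - mulVecE Aᵀ w) : ℝ) := by
    rw [hd]; exact firm_vec hμ _ _
  have h2 : ‖mulVecE A d‖ ^ 2 ≤ N * ‖d‖ ^ 2 := hA d
  have h3 : (inner ℝ (lam • mulVecE A d) (v - w) : ℝ)
      = lam * inner ℝ d (mulVecE Aᵀ (v - w)) := by
    rw [real_inner_smul_left, inner_mulVecE]
  have h4 : mulVecE Aᵀ (v - w) = mulVecE Aᵀ v - mulVecE Aᵀ w := mulVecE_sub Aᵀ v w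
  rw [h3, h4]
  have h5 : ‖lam • mulVecE A d‖ ^ 2 = lam ^ 2 * ‖mulVecE A d‖ ^ 2 := by
    rw [norm_smul, Real.norm_eq_abs, abs_of_pos hlam, mul_pow]
  rw [h5]
  nlinarith [mul_le_mul_of_nonneg_left h2 (by positivity : (0:ℝ) ≤ lam ^ 2),
    mul_le_mul_of_nonneg_left h1 (by positivity : (0:ℝ) ≤ lam ^ 2 * N)]

lemma useq_conv {m s : ℕ} {μ lam N : ℝ} (hμ : 0 < μ) (hlam : 0 < lam) (hN : 0 < N)
    (hlamN : lam * N < 1)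
    (A : Matrix (Fin m) (Fin s) ℝ) (bR : EuclideanSpace ℝ (Fin m))
    (hbR : bR ∈ LinearMap.range (Matrix.toEuclideanLin A))
    (hA : ∀ d : EuclideanSpace ℝ (Fin s), ‖mulVecE A d‖ ^ 2 ≤ N * ‖d‖ ^ 2) :
    ∃ ubar : EuclideanSpace ℝ (Fin m), Gmap lam μ A bR ubar = 0 ∧
      Tendsto (useq lam μ A bR) atTop (nhds ubar) := by
  set G := Gmap lam μ A bR with hG
  set u := useq lam μ A bR with hu
  have huS : ∀ n, u (n + 1) = u n - G (u n) := fun n => rfl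
  have hfejer : ∀ p, G p = 0 → ∀ n, ‖u (n + 1) - p‖ ^ 2 + ‖G (u n)‖ ^ 2 ≤ ‖u n - p‖ ^ 2 := by
    intro p hp n
    have hc := Gmap_coco hμ.le hlam hN A bR hA (u n) p
    rw [← hG] at hc
    rw [hp, sub_zero] at hc
    have hexp : ‖u (n + 1) - p‖ ^ 2
        = ‖u n - p‖ ^ 2 - 2 * inner ℝ (G (u n)) (u n - p) + ‖G (u n)‖ ^ 2 := by
      rw [huS n]
      have e : u n - G (u n) - p = (u n - p) - G (u n) := by abel
      rw [e, norm_sub_sq_real, real_inner_comm]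
      try ring
    rw [hexp]
    have hip : 0 ≤ (inner ℝ (G (u n)) (u n - p) : ℝ) := by
      nlinarith [hc, sq_nonneg ‖G (u n)‖, mul_pos hlam hN]
    nlinarith [hc, mul_nonneg hip (by linarith : (0:ℝ) ≤ 1 - lam * N)]
  obtain ⟨p0, hp0⟩ := exists_critical hμ hlam A bR hbR
  rw [← hG] at hp0
  have hbound : ∀ n, ‖u n - p0‖ ^ 2 ≤ ‖u 0 - p0‖ ^ 2 := by
    intro n
    induction n with
    | zero => exact le_refl _
    | succ n ih =>
      have := hfejer p0 hp0 n
      nlinarith [sq_nonneg ‖G (u n)‖]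
  have hsumle : ∀ n, ∑ k ∈ Finset.range n, ‖G (u k)‖ ^ 2 ≤ ‖u 0 - p0‖ ^ 2 := by
    have htel : ∀ n, (∑ k ∈ Finset.range n, ‖G (u k)‖ ^ 2) + ‖u n - p0‖ ^ 2
        ≤ ‖u 0 - p0‖ ^ 2 := by
      intro n
      induction n with
      | zero => simp
      | succ n ih =>
        rw [Finset.sum_range_succ]
        have := hfejer p0 hp0 n
        linarith
    intro n
    have := htel n
    nlinarith [sq_nonneg ‖u n - p0‖]
  have hsummable : Summable fun n => ‖G (u n)‖ ^ 2 :=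
    summable_of_sum_range_le (fun n => sq_nonneg _) hsumle
  have hGnorm0 : Tendsto (fun n => ‖G (u n)‖) atTop (nhds 0) :=
    tendsto_norm_zero_of_sq (fun n => norm_nonneg _) hsummable.tendsto_atTop_zero
  have hG0 : Tendsto (fun n => G (u n)) atTop (nhds 0) :=
    tendsto_zero_iff_norm_tendsto_zero.mpr hGnorm0
  have hmem : ∀ n, u n ∈ Metric.closedBall p0 ‖u 0 - p0‖ := by
    intro n
    rw [Metric.mem_closedBall, dist_eq_norm]
    exact norm_le_of_sq_le_sq (norm_nonneg _) (hbound n)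
  obtain ⟨ubar, _, φ, hφ, hφtend⟩ :=
    tendsto_subseq_of_bounded Metric.isBounded_closedBall hmem
  have hGcont : Continuous G := by
    rw [hG]
    unfold Gmap
    exact (((continuous_mulVecE A).comp
      ((continuous_soft hμ.le).comp (continuous_mulVecE Aᵀ))).const_smul lam).sub
      continuous_const
  have hGubar : G ubar = 0 := by
    have h1 : Tendsto (fun k => G (u (φ k))) atTop (nhds (G ubar)) :=
      (hGcont.tendsto ubar).comp hφtend
    have h2 : Tendsto (fun k => G (u (φ k))) atTop (nhds 0) := hG0.comp hφ.tendsto_atTop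
    exact tendsto_nhds_unique h1 h2
  refine ⟨ubar, hGubar, ?_⟩
  have hanti : Antitone fun n => ‖u n - ubar‖ ^ 2 := by
    apply antitone_nat_of_succ_le
    intro n
    have := hfejer ubar hGubar n
    nlinarith [sq_nonneg ‖G (u n)‖]
  have hsubseq0 : Tendsto (fun k => ‖u (φ k) - ubar‖ ^ 2) atTop (nhds 0) := by
    have hc : Continuous fun v : EuclideanSpace ℝ (Fin m) => ‖v - ubar‖ ^ 2 :=
      (continuous_id.sub continuous_const).norm.pow 2
    have := (hc.tendsto ubar).comp hφtend
    simpa [Function.comp_def] using this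
  have h0 := tendsto_of_antitone_of_subseq hanti (fun n => sq_nonneg _) hφ hsubseq0
  have hn := tendsto_norm_zero_of_sq (fun n => norm_nonneg _) h0
  rw [tendsto_iff_dist_tendsto_zero]
  simpa [dist_eq_norm] using hn

/-- Convergence of the modified linearized Bregman algorithm (MLBA) with a symmetric
positive definite preconditioner `P` and `0 < λ < 1/‖KᵀPK‖`: the iterates `x^n` converge
to the unique minimizer of `μ‖x‖₁ + (1/(2λ))‖x‖²` over the set of minimizers
of `‖Kx − g‖²_P = (Kx − g)ᵀP(Kx − g)`. -/
theorem stmt1 {m s : ℕ}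
    (K : Matrix (Fin m) (Fin s) ℝ) (g : EuclideanSpace ℝ (Fin m))
    (μ lam : ℝ) (hμ : 0 < μ)
    (P : Matrix (Fin m) (Fin m) ℝ) (hP : P.PosDef)
    (hlam0 : 0 < lam) (hlam1 : lam < 1 / specNorm (Kᵀ * P * K))
    (z x : ℕ → EuclideanSpace ℝ (Fin s))
    (hz0 : z 0 = 0) (hx0 : x 0 = 0)
    (hz : ∀ n, z (n + 1) = z n + mulVecE (Kᵀ * P) (g - mulVecE K (x n)))
    (hx : ∀ n, x (n + 1) = lam • soft μ (z (n + 1))) :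
    ∃ xstar : EuclideanSpace ℝ (Fin s),
      (∀ y, dotProduct (mulVecE K xstar - g) (P.mulVec (mulVecE K xstar - g)) ≤
            dotProduct (mulVecE K y - g) (P.mulVec (mulVecE K y - g))) ∧
      (∀ y, (∀ w, dotProduct (mulVecE K y - g) (P.mulVec (mulVecE K y - g)) ≤
                  dotProduct (mulVecE K w - g) (P.mulVec (mulVecE K w - g))) →
        μ * l1norm xstar + (1 / (2 * lam)) * ‖xstar‖ ^ 2 ≤
          μ * l1norm y + (1 / (2 * lam)) * ‖y‖ ^ 2) ∧
      (∀ y, (∀ w, dotProduct (mulVecE K y - g) (P.mulVec (mulVecE K y - g)) ≤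
                  dotProduct (mulVecE K w - g) (P.mulVec (mulVecE K w - g))) →
        (∀ w, (∀ v, dotProduct (mulVecE K w - g) (P.mulVec (mulVecE K w - g)) ≤
                    dotProduct (mulVecE K v - g) (P.mulVec (mulVecE K v - g))) →
          μ * l1norm y + (1 / (2 * lam)) * ‖y‖ ^ 2 ≤
            μ * l1norm w + (1 / (2 * lam)) * ‖w‖ ^ 2) →
        y = xstar) ∧
      Tendsto x atTop (nhds xstar) := by
  have hμ' : 0 ≤ μ := hμ.le
  have hNnonneg : 0 ≤ specNorm (Kᵀ * P * K) := norm_nonneg _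
  have hNpos : 0 < specNorm (Kᵀ * P * K) := by
    rcases hNnonneg.lt_or_eq with h | h
    · exact h
    · exfalso; rw [← h] at hlam1; norm_num at hlam1; linarith
  have hlamN : lam * specNorm (Kᵀ * P * K) < 1 := by
    rw [lt_div_iff₀ hNpos] at hlam1; exact hlam1
  set N := specNorm (Kᵀ * P * K) with hNdef
  have hPsd := hP.posSemidef
  obtain ⟨C, hCH', hCC'⟩ : ∃ C : Matrix (Fin m) (Fin m) ℝ, Cᴴ = C ∧ C * C = P := by
    open scoped MatrixOrder in
    exact ⟨CFC.sqrt P, (CFC.sqrt_nonneg P).posSemidef.1, CFC.sqrt_mul_sqrt_self P hPsd.nonneg⟩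
  have hCsymm : Cᵀ = C := by
    have hCH : Cᴴ = C := hCH'
    have hTC : Cᵀ = Cᴴ := by
      ext i j
      simp [Matrix.conjTranspose_apply, Matrix.transpose_apply]
    rw [hTC, hCH]
  have hCC : C * C = P := hCC'
  set A := C * K with hAdef
  have hAT : Aᵀ = Kᵀ * C := by rw [hAdef, Matrix.transpose_mul, hCsymm]
  have hATA : Aᵀ * A = Kᵀ * P * K := by
    rw [hAT, hAdef, Matrix.mul_assoc Kᵀ C (C * K), ← Matrix.mul_assoc C C K, hCC,
      ← Matrix.mul_assoc]
  set b := mulVecE C g with hbdef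
  have hA : ∀ d : EuclideanSpace ℝ (Fin s), ‖mulVecE A d‖ ^ 2 ≤ N * ‖d‖ ^ 2 := by
    intro d
    have h1 : ‖mulVecE A d‖ ^ 2 = (inner ℝ d (mulVecE (Kᵀ * P * K) d) : ℝ) := by
      rw [← real_inner_self_eq_norm_sq, inner_mulVecE, mulVecE_mulVecE, hATA]
    rw [h1]
    calc (inner ℝ d (mulVecE (Kᵀ * P * K) d) : ℝ) ≤ ‖d‖ * ‖mulVecE (Kᵀ * P * K) d‖ :=
          real_inner_le_norm _ _
    _ ≤ ‖d‖ * (N * ‖d‖) :=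
          mul_le_mul_of_nonneg_left (norm_mulVecE_le _ _) (norm_nonneg d)
    _ = N * ‖d‖ ^ 2 := by ring
  set V : Submodule ℝ (EuclideanSpace ℝ (Fin m)) := LinearMap.range (Matrix.toEuclideanLin A)
    with hVdef
  have hmemA : ∀ y : EuclideanSpace ℝ (Fin s), mulVecE A y ∈ V :=
    fun y => ⟨y, (mulVecE_eq_toE A y).symm⟩
  set bR : EuclideanSpace ℝ (Fin m) := (V.orthogonalProjectionOnto b : EuclideanSpace ℝ (Fin m))
    with hbRdef
  have hbRV : bR ∈ V := SetLike.coe_mem _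
  have hborth : b - bR ∈ Vᗮ := Submodule.sub_starProjection_mem_orthogonal b
  have hAtb : mulVecE Aᵀ b = mulVecE Aᵀ bR := by
    have hz' : (inner ℝ (mulVecE Aᵀ (b - bR)) (mulVecE Aᵀ (b - bR)) : ℝ) = 0 := by
      have h1 : (inner ℝ (mulVecE Aᵀ (b - bR)) (mulVecE Aᵀ (b - bR)) : ℝ)
          = inner ℝ (mulVecE A (mulVecE Aᵀ (b - bR))) (b - bR) := by
        rw [real_inner_comm, ← inner_mulVecE]
      rw [h1]
      exact (Submodule.mem_orthogonal V (b - bR)).mp hborth _ (hmemA _)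
    have h00 : mulVecE Aᵀ (b - bR) = 0 := inner_self_eq_zero.mp hz'
    rw [mulVecE_sub] at h00
    exact sub_eq_zero.mp h00
  obtain ⟨ubar, hGubar, hulim⟩ := useq_conv hμ hlam0 hNpos hlamN A bR hbRV hA
  set u := useq lam μ A bR with hudef
  have huS : ∀ n, u (n + 1) = u n - Gmap lam μ A bR (u n) := fun n => rfl
  have hu0 : u 0 = (0 : EuclideanSpace ℝ (Fin m)) := rfl
  have hKP : ∀ w : EuclideanSpace ℝ (Fin m),
      mulVecE (Kᵀ * P) w = mulVecE Aᵀ (mulVecE C w) := by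
    intro w
    rw [mulVecE_mulVecE, hAT, Matrix.mul_assoc, hCC]
  have hinv : ∀ n, z n = mulVecE Aᵀ (u n) ∧ x n = lam • soft μ (mulVecE Aᵀ (u n)) := by
    intro n
    induction n with
    | zero =>
      constructor
      · rw [hz0, hu0, mulVecE_zero]
      · rw [hx0, hu0, mulVecE_zero, soft_zero hμ', smul_zero]
    | succ n ih =>
      obtain ⟨ihz, ihx⟩ := ih
      have hznew : z (n + 1) = mulVecE Aᵀ (u (n + 1)) := by
        rw [hz n, ihz, huS n, hKP, mulVecE_sub C g (mulVecE K (x n)),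
          mulVecE_mulVecE C K (x n), ← hAdef, ← hbdef, ihx, Gmap, mulVecE_smul A lam _,
          mulVecE_sub Aᵀ (u n) _, mulVecE_sub Aᵀ _ bR, mulVecE_sub Aᵀ b _, hAtb]
        abel
      exact ⟨hznew, by rw [hx n, hznew]⟩
  set xstar := lam • soft μ (mulVecE Aᵀ ubar) with hxstardef
  have hxlim : Tendsto x atTop (nhds xstar) := by
    have hc : Continuous fun v : EuclideanSpace ℝ (Fin m) => lam • soft μ (mulVecE Aᵀ v) :=
      (((continuous_soft hμ').comp (continuous_mulVecE Aᵀ)).const_smul lam)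
    have h1 := (hc.tendsto ubar).comp hulim
    apply h1.congr
    intro n
    exact ((hinv n).2).symm
  have hAxstar : mulVecE A xstar = bR := by
    have h := hGubar
    rw [Gmap] at h
    have h2 : mulVecE A xstar = lam • mulVecE A (soft μ (mulVecE Aᵀ ubar)) := by
      rw [hxstardef, mulVecE_smul]
    rw [h2]
    exact sub_eq_zero.mp h
  have hQ : ∀ y : EuclideanSpace ℝ (Fin s),
      dotProduct (mulVecE K y - g) (P.mulVec (mulVecE K y - g))
        = ‖mulVecE A y - b‖ ^ 2 := by
    intro y
    set w : EuclideanSpace ℝ (Fin m) := mulVecE K y - g with hwdef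
    have e0 : dotProduct (w : Fin m → ℝ) (P.mulVec (w : Fin m → ℝ))
        = (inner ℝ w (mulVecE P w) : ℝ) := by
      rw [real_inner_eq_dot]; rfl
    show dotProduct (w : Fin m → ℝ) (P.mulVec (w : Fin m → ℝ)) = _
    rw [e0, ← hCC, ← mulVecE_mulVecE C C w, real_inner_comm,
      inner_mulVecE C (mulVecE C w) w, hCsymm, real_inner_self_eq_norm_sq]
    congr 1
    rw [hwdef, mulVecE_sub, mulVecE_mulVecE, ← hAdef, ← hbdef]
  have hPyth : ∀ y : EuclideanSpace ℝ (Fin s),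
      ‖mulVecE A y - b‖ ^ 2 = ‖mulVecE A y - bR‖ ^ 2 + ‖bR - b‖ ^ 2 := by
    intro y
    have hmemV : mulVecE A y - bR ∈ V := V.sub_mem (hmemA y) hbRV
    have hperp : (inner ℝ (mulVecE A y - bR) (bR - b) : ℝ) = 0 := by
      have h1 := (Submodule.mem_orthogonal V (b - bR)).mp hborth _ hmemV
      have h2 : bR - b = -(b - bR) := by abel
      rw [h2, inner_neg_right, h1, neg_zero]
    have hsplit : mulVecE A y - b = (mulVecE A y - bR) + (bR - b) := by abel
    rw [hsplit, norm_add_sq_real, hperp]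
    ring
  have hbullet1 : ∀ y,
      dotProduct (mulVecE K xstar - g) (P.mulVec (mulVecE K xstar - g)) ≤
      dotProduct (mulVecE K y - g) (P.mulVec (mulVecE K y - g)) := by
    intro y
    rw [hQ, hQ, hPyth, hPyth, hAxstar]
    simp only [sub_self, norm_zero]
    nlinarith [sq_nonneg ‖mulVecE A y - bR‖]
  have hQchar : ∀ y, (∀ w, dotProduct (mulVecE K y - g) (P.mulVec (mulVecE K y - g)) ≤
      dotProduct (mulVecE K w - g) (P.mulVec (mulVecE K w - g))) →
      mulVecE A y = bR := by
    intro y hy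
    have h1 := hy xstar
    rw [hQ, hQ, hPyth, hPyth, hAxstar] at h1
    simp only [sub_self, norm_zero] at h1
    have h2 : ‖mulVecE A y - bR‖ = 0 := by
      nlinarith [norm_nonneg (mulVecE A y - bR), sq_nonneg ‖mulVecE A y - bR‖]
    exact sub_eq_zero.mp (norm_eq_zero.mp h2)
  have hJbig : ∀ y : EuclideanSpace ℝ (Fin s), mulVecE A y = bR →
      2 * lam * μ * l1norm xstar + ‖xstar‖ ^ 2 + ‖y - xstar‖ ^ 2
        ≤ 2 * lam * μ * l1norm y + ‖y‖ ^ 2 := by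
    intro y hy
    have hxi : ∀ i, xstar i = lam * ssc μ ((mulVecE Aᵀ ubar) i) := by
      intro i
      rw [hxstardef, PiLp.smul_apply, soft_apply_ssc hμ', smul_eq_mul]
    have hsum := Finset.sum_le_sum (s := Finset.univ)
      (fun i (_ : i ∈ Finset.univ) => ssc_key hμ' hlam0 ((mulVecE Aᵀ ubar) i) (y i))
    simp only [← hxi] at hsum
    rw [Finset.sum_add_distrib, Finset.sum_add_distrib, Finset.sum_add_distrib,
      Finset.sum_add_distrib] at hsum
    have hzeroterm : ∑ i, ((mulVecE Aᵀ ubar) i * (y i - xstar i)) = 0 := by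
      have e0 : ∑ i, ((mulVecE Aᵀ ubar) i * (y i - xstar i))
          = ∑ i, ((mulVecE Aᵀ ubar) i * ((y - xstar) i)) := by
        apply Finset.sum_congr rfl; intro i _; rw [PiLp.sub_apply]
      have e1 : ∑ i, ((mulVecE Aᵀ ubar) i * ((y - xstar) i))
          = (inner ℝ (mulVecE Aᵀ ubar) (y - xstar) : ℝ) := (real_inner_eq_dot _ _).symm
      have e2 : (inner ℝ (mulVecE Aᵀ ubar) (y - xstar) : ℝ)
          = inner ℝ ubar (mulVecE A (y - xstar)) := by
        rw [inner_mulVecE, Matrix.transpose_transpose]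
      have e3 : mulVecE A (y - xstar) = 0 := by rw [mulVecE_sub, hy, hAxstar, sub_self]
      rw [e0, e1, e2, e3, inner_zero_right]
    have e_l1x : ∑ i, 2 * lam * μ * |xstar i| = 2 * lam * μ * l1norm xstar := by
      rw [l1norm, Finset.mul_sum]
    have e_nx : ∑ i, (xstar i) ^ 2 = ‖xstar‖ ^ 2 := by
      rw [norm_sq_eq_dot]
      apply Finset.sum_congr rfl; intro i _; ring
    have e_zero : ∑ i, 2 * lam * ((mulVecE Aᵀ ubar) i * (y i - xstar i)) = 0 := by
      rw [← Finset.mul_sum, hzeroterm, mul_zero]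
    have e_dxy : ∑ i, (y i - xstar i) ^ 2 = ‖y - xstar‖ ^ 2 := by
      rw [norm_sq_eq_dot]
      apply Finset.sum_congr rfl; intro i _; rw [PiLp.sub_apply]; ring
    have e_l1y : ∑ i, 2 * lam * μ * |y i| = 2 * lam * μ * l1norm y := by
      rw [l1norm, Finset.mul_sum]
    have e_ny : ∑ i, (y i) ^ 2 = ‖y‖ ^ 2 := by
      rw [norm_sq_eq_dot]
      apply Finset.sum_congr rfl; intro i _; ring
    rw [e_l1x, e_nx, e_zero, e_dxy, e_l1y, e_ny] at hsum
    linarith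
  have h2l : (0 : ℝ) < 2 * lam := by linarith
  have hconv : ∀ a bb : ℝ, μ * a + 1 / (2 * lam) * bb = (2 * lam * μ * a + bb) / (2 * lam) := by
    intro a bb; field_simp
  refine ⟨xstar, hbullet1, ?_, ?_, hxlim⟩
  · intro y hy
    have hAy := hQchar y hy
    have h := hJbig y hAy
    rw [hconv (l1norm xstar) (‖xstar‖ ^ 2), hconv (l1norm y) (‖y‖ ^ 2),
      div_le_div_iff₀ h2l h2l]
    nlinarith [h, sq_nonneg ‖y - xstar‖, h2l]
  · intro y hy hopt
    have hAy := hQchar y hy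
    have h1 := hJbig y hAy
    have h2 := hopt xstar hbullet1
    rw [hconv (l1norm y) (‖y‖ ^ 2), hconv (l1norm xstar) (‖xstar‖ ^ 2),
      div_le_div_iff₀ h2l h2l] at h2
    have h3 : 2 * lam * μ * l1norm y + ‖y‖ ^ 2 ≤ 2 * lam * μ * l1norm xstar + ‖xstar‖ ^ 2 :=
      le_of_mul_le_mul_right (by nlinarith [h2]) h2l
    have h4 : ‖y - xstar‖ ^ 2 ≤ 0 := by linarith
    have h5 : ‖y - xstar‖ = 0 := by
      nlinarith [norm_nonneg (y - xstar), sq_nonneg ‖y - xstar‖]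
    exact sub_eq_zero.mp (norm_eq_zero.mp h5)
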